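/- arXiv:0903.0331 — 8 statements merged into one kernel-verified Lean document; each statement's English description precedes it below -/
import Mathlib

section
/- Let K > 0 and define the piecewise linear map F(X,Y) = (Y + 3·max(0,X) − 3·max(X,Y), X + 3·max(0,Y) − 3·max(X,Y)) on ℝ². If (X,Y) satisfies max(3X, 3Y, 0) = X + Y + K, then F(X,Y) also satisfies max(3X̄, 3Ȳ, 0) = X̄ + Ȳ + K. That is, the ultradiscrete Hesse map preserves the cycle of the tropical cubic curve. -/
theorem ultradiscrete_hesse_preserves_cycle (K X Y : ℝ) (hK : 0 < K)
    (h : max (max (3 * X) (3 * Y)) 0 = X + Y + K) :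
    max (max (3 * (Y + 3 * max 0 X - 3 * max X Y)) (3 * (X + 3 * max 0 Y - 3 * max X Y))) 0 =
      (Y + 3 * max 0 X - 3 * max X Y) + (X + 3 * max 0 Y - 3 * max X Y) + K := by
  simp only [max_def] at h ⊢
  split_ifs at h ⊢ <;> linarith
end

section
/- Let K > 0. The quantity K(X,Y) := 3·max(X, Y, 0) − X − Y is a conserved quantity of the map F(X,Y) = (Y + 3·max(0,X) − 3·max(X,Y), X + 3·max(0,Y) − 3·max(X,Y)); i.e., K(F(X,Y)) = K(X,Y) for all (X,Y) on the curve max(3X,3Y,0) = X+Y+K. -/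
set_option maxHeartbeats 2000000


theorem ultradiscrete_hesse_conserved_quantity (K X Y : ℝ) (hK : 0 < K)
    (h : max (max (3 * X) (3 * Y)) 0 = X + Y + K) :
    3 * max (max (Y + 3 * max 0 X - 3 * max X Y) (X + 3 * max 0 Y - 3 * max X Y)) 0
      - (Y + 3 * max 0 X - 3 * max X Y) - (X + 3 * max 0 Y - 3 * max X Y)
    = 3 * max (max X Y) 0 - X - Y := by
  simp only [max_def] at h ⊢
  split_ifs at h ⊢ <;> linarith
end

section
/- Let K > 0 and suppose (X,Y) lies on the edge E₁ of the tropical cubic curve, i.e., X + Y + K = 0 with −K ≤ X ≤ 0 and −K ≤ Y ≤ 0, and X ≤ Y. Then the image under the map F(X,Y) = (Y − 3·max(X,Y), X − 3·max(X,Y)) is the point (−2Y, X − 3Y), which lies on the edge E₂, i.e., satisfies 3X̄ = X̄ + Ȳ + K with 0 ≤ X̄ ≤ K. -/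
theorem hesse_map_E1_to_E2 (K X Y : ℝ) (hK : 0 < K)
    (hE1 : X + Y + K = 0) (hX1 : -K ≤ X) (hX2 : X ≤ 0) (hY1 : -K ≤ Y) (hY2 : Y ≤ 0)
    (hXY : X ≤ Y) :
    (Y - 3 * max X Y, X - 3 * max X Y) = (-2 * Y, X - 3 * Y) ∧
    3 * (-2 * Y) = (-2 * Y) + (X - 3 * Y) + K ∧
    0 ≤ -2 * Y ∧ -2 * Y ≤ K := by
  rw [max_eq_right hXY]
  refine ⟨by ring_nf, by linarith, by linarith, by linarith⟩
end

section
/- Let K > 0 and define the Abel–Jacobi coordinate on the tropical cubic cycle: for P on edge E₁ parametrized as P = (−(1−s)K, −sK) with 0 ≤ s ≤ 1, set η(P) = (1+s)K. For 0 ≤ s ≤ 1/2 (so X ≤ Y), the image P̄ = (Y − 3Y, X − 3Y) = (2sK, (−1+4s)K) lies on edge E₂ and satisfies η(P̄) = 2η(P) − 3K, i.e., η(P̄) ≡ 2η(P) mod 3K. -/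
theorem abel_jacobi_duplication_E1 (K s : ℝ) (hK : 0 < K) (hs0 : 0 ≤ s) (hs : s ≤ 1 / 2) :
    let X : ℝ := -(1 - s) * K
    let Y : ℝ := -s * K
    -- the image point P̄ = (Y − 3Y, X − 3Y)
    (Y - 3 * Y, X - 3 * Y) = (2 * s * K, (-1 + 4 * s) * K) ∧
    -- P̄ lies on edge E₂ : 3X̄ = X̄ + Ȳ + K, i.e. P̄ = V₂ + t(V₃ − V₂) with t = 2s ∈ [0,1]
    3 * (2 * s * K) = (2 * s * K) + ((-1 + 4 * s) * K) + K ∧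
    (2 * s * K, (-1 + 4 * s) * K) = ((0 : ℝ) + (2 * s) * K, -K + (2 * s) * (2 * K)) ∧
    0 ≤ 2 * s ∧ 2 * s ≤ 1 ∧
    -- η(P̄) ≡ 2η(P) mod 3K, where η(P̄) = 2K + (2s)K and η(P) = (1+s)K
    ∃ m : ℤ, 2 * K + (2 * s) * K = 2 * ((1 + s) * K) + (m : ℝ) * (3 * K) := by
  refine ⟨by rw [Prod.mk.injEq]; exact ⟨by ring, by ring⟩, by ring, by rw [Prod.mk.injEq]; exact ⟨by ring, by ring⟩, by linarith, by linarith, 0, by push_cast; ring⟩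
end

section
/- Let K > 0 and define X(u) = S(u − K; 3K, 2K, 9K/2) and Y(u) = S(u − 2K; 3K, K, 9K/2), where S(u; α, β, θ) = Θ(u/α; θ) − Θ((u−β)/α; θ) and Θ(u; θ) = −θ(frac(u) − 1/2)². Then for every u ∈ ℝ, the point (X(u), Y(u)) lies on the tropical cubic cycle: max(3X(u), 3Y(u), 0) = X(u) + Y(u) + K. -/
noncomputable def uTheta (θ u : ℝ) : ℝ := -θ * (Int.fract u - 1 / 2) ^ 2

noncomputable def Sfn (α β θ u : ℝ) : ℝ := uTheta θ (u / α) - uTheta θ ((u - β) / α)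

lemma fract_shift (x c : ℝ) : Int.fract (x - c) = Int.fract (Int.fract x - c) := by
  conv_lhs => rw [show x - c = (⌊x⌋ : ℤ) + (Int.fract x - c) by rw [Int.fract]; push_cast; ring]
  rw [Int.fract_intCast_add]


lemma max_helper_mid (a b c : ℝ) (h1 : a ≤ b) (h2 : 0 ≤ b) (h3 : b = c) :
    max (max a b) 0 = c := by rw [max_eq_right h1, max_eq_left h2, h3]

lemma max_helper_zero (a b c : ℝ) (h1 : a ≤ 0) (h2 : b ≤ 0) (h3 : c = 0) :
    max (max a b) 0 = c := by rw [max_eq_right (max_le h1 h2), h3]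

lemma max_helper_left (a b c : ℝ) (h1 : b ≤ a) (h2 : 0 ≤ a) (h3 : a = c) :
    max (max a b) 0 = c := by rw [max_eq_left h1, max_eq_left h2, h3]

theorem solution_on_tropical_cycle (K : ℝ) (hK : 0 < K) (u : ℝ) :
    let X := Sfn (3 * K) (2 * K) (9 * K / 2) (u - K)
    let Y := Sfn (3 * K) K (9 * K / 2) (u - 2 * K)
    max (max (3 * X) (3 * Y)) 0 = X + Y + K := by
  intro X Y
  have h3K : (3 : ℝ) * K ≠ 0 := by positivity
  set x := u / (3 * K) with hx
  set w := Int.fract x with hw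
  have hw0 : 0 ≤ w := Int.fract_nonneg x
  have hw1 : w < 1 := Int.fract_lt_one x
  have e1 : (u - K) / (3 * K) = x - 1/3 := by rw [hx]; field_simp
  have e2 : (u - K - 2 * K) / (3 * K) = x - 1 := by rw [hx]; field_simp; ring
  have e3 : (u - 2 * K) / (3 * K) = x - 2/3 := by rw [hx]; field_simp
  have e4 : (u - 2 * K - K) / (3 * K) = x - 1 := by rw [hx]; field_simp; ring
  have f1 : Int.fract (x - 1) = w := by
    rw [show x - 1 = x - ((1 : ℤ) : ℝ) by norm_num, Int.fract_sub_intCast]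
  have fA : Int.fract (x - 1/3) = if w < 1/3 then w + 2/3 else w - 1/3 := by
    rw [fract_shift, ← hw]
    split_ifs with h
    · rw [Int.fract_eq_iff]
      exact ⟨by linarith, by linarith, ⟨-1, by push_cast; ring⟩⟩
    · rw [Int.fract_eq_self.2 ⟨by linarith, by linarith⟩]
  have fB : Int.fract (x - 2/3) = if w < 2/3 then w + 1/3 else w - 2/3 := by
    rw [fract_shift, ← hw]
    split_ifs with h
    · rw [Int.fract_eq_iff]
      exact ⟨by linarith, by linarith, ⟨-1, by push_cast; ring⟩⟩
    · rw [Int.fract_eq_self.2 ⟨by linarith, by linarith⟩]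
  have hX : X = Sfn (3 * K) (2 * K) (9 * K / 2) (u - K) := rfl
  have hY : Y = Sfn (3 * K) K (9 * K / 2) (u - 2 * K) := rfl
  rw [hX, hY]
  simp only [Sfn, uTheta, e1, e2, e3, e4, f1, fA, fB]
  rcases lt_or_ge w (1/3) with h1 | h1
  · have h2 : w < 2/3 := by linarith
    simp only [if_pos h1, if_pos h2]
    exact max_helper_mid _ _ _ (by nlinarith) (by nlinarith) (by ring)
  · rcases lt_or_ge w (2/3) with h2 | h2
    · simp only [if_neg (not_lt.2 h1), if_pos h2]
      exact max_helper_zero _ _ _ (by nlinarith) (by nlinarith) (by ring)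
    · simp only [if_neg (not_lt.2 h1), if_neg (not_lt.2 h2)]
      exact max_helper_left _ _ _ (by nlinarith) (by nlinarith) (by ring)
end

section
/- Let x, y ∈ ℝ with x³ ≠ y³, x³ + y³ + 1 = 3μxy for some μ ∈ ℝ. Define x̄ = (1 − x³)y/(x³ − y³) and ȳ = (1 − y³)x/(y³ − x³). Then x̄³ + ȳ³ + 1 = 3μ·x̄·ȳ. That is, the duplication map preserves the Hesse cubic curve x³ + y³ + 1 = 3μxy. -/
theorem hesse_duplication_preserves_curve (x y μ : ℝ) (hxy : x ^ 3 ≠ y ^ 3)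
    (h : x ^ 3 + y ^ 3 + 1 = 3 * μ * x * y) :
    ((1 - x ^ 3) * y / (x ^ 3 - y ^ 3)) ^ 3 + ((1 - y ^ 3) * x / (y ^ 3 - x ^ 3)) ^ 3 + 1 =
      3 * μ * ((1 - x ^ 3) * y / (x ^ 3 - y ^ 3)) * ((1 - y ^ 3) * x / (y ^ 3 - x ^ 3)) := by
  have hd : x ^ 3 - y ^ 3 ≠ 0 := sub_ne_zero.mpr hxy
  have hd' : y ^ 3 - x ^ 3 ≠ 0 := sub_ne_zero.mpr (Ne.symm hxy)
  have key :
      (((1 - x ^ 3) * y / (x ^ 3 - y ^ 3)) ^ 3 + ((1 - y ^ 3) * x / (y ^ 3 - x ^ 3)) ^ 3 + 1) -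
        (3 * μ * ((1 - x ^ 3) * y / (x ^ 3 - y ^ 3)) * ((1 - y ^ 3) * x / (y ^ 3 - x ^ 3))) =
      ((1 - x ^ 3) * (1 - y ^ 3) / (x ^ 3 - y ^ 3) ^ 2) *
        (3 * μ * x * y - (x ^ 3 + y ^ 3 + 1)) := by
    field_simp
    ring
  have h0 : 3 * μ * x * y - (x ^ 3 + y ^ 3 + 1) = 0 := by linarith
  rw [h0, mul_zero] at key
  linarith
end

section
/- In homogeneous coordinates, the duplication map on the Hesse cubic is 2·[x₀:x₁:x₂] = [x₁(x₂³−x₀³) : x₀(x₁³−x₂³) : x₂(x₀³−x₁³)]. Verify: if x₀³ + x₁³ + x₂³ = 3μ x₀x₁x₂, then setting y₀ = x₁(x₂³−x₀³), y₁ = x₀(x₁³−x₂³), y₂ = x₂(x₀³−x₁³), one has y₀³ + y₁³ + y₂³ = 3μ y₀y₁y₂. -/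
theorem hesse_duplication_homogeneous {R : Type*} [CommRing R] (μ x₀ x₁ x₂ : R)
    (h : x₀ ^ 3 + x₁ ^ 3 + x₂ ^ 3 = 3 * μ * x₀ * x₁ * x₂) :
    (x₁ * (x₂ ^ 3 - x₀ ^ 3)) ^ 3 + (x₀ * (x₁ ^ 3 - x₂ ^ 3)) ^ 3 + (x₂ * (x₀ ^ 3 - x₁ ^ 3)) ^ 3 =
      3 * μ * (x₁ * (x₂ ^ 3 - x₀ ^ 3)) * (x₀ * (x₁ ^ 3 - x₂ ^ 3)) * (x₂ * (x₀ ^ 3 - x₁ ^ 3)) := by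
  linear_combination (x₁^3*x₂^6 - x₁^6*x₂^3 - x₀^3*x₂^6 + x₀^3*x₁^6 + x₀^6*x₂^3 - x₀^6*x₁^3) * h
end

section
/- For the real duplication map x̄ = (1−x³)y/(x³−y³), ȳ = (1−y³)x/(y³−x³) on the Hesse cubic: if x̄ > 0 and ȳ > 0 for real (x,y) with x³ ≠ y³, then a contradiction arises; i.e., the image of the map applied to any real point never lies in the open first quadrant. -/
lemma hesse_aux (x y : ℝ) (hd : y ^ 3 < x ^ 3)
    (h1 : 0 < (1 - x ^ 3) * y / (x ^ 3 - y ^ 3))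
    (h2 : 0 < (1 - y ^ 3) * x / (y ^ 3 - x ^ 3)) : False := by
  have hdpos : (0:ℝ) < x ^ 3 - y ^ 3 := by linarith
  have hA : 0 < (1 - x ^ 3) * y := by
    by_contra h
    push_neg at h
    have := div_nonpos_of_nonpos_of_nonneg h hdpos.le
    linarith
  have hB : (1 - y ^ 3) * x < 0 := by
    by_contra h
    push_neg at h
    have hneg : y ^ 3 - x ^ 3 < 0 := by linarith
    have := div_nonpos_of_nonneg_of_nonpos h hneg.le
    linarith
  have odd3 : Odd 3 := ⟨1, by ring⟩
  rcases mul_pos_iff.mp hA with ⟨hx1, hy⟩ | ⟨hx1, hy⟩ <;>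
    rcases mul_neg_iff.mp hB with ⟨hy1, hx⟩ | ⟨hy1, hx⟩
  · have h3 : x ^ 3 < 0 := Odd.pow_neg odd3 hx
    have h4 : 0 < y ^ 3 := pow_pos hy 3
    linarith
  · linarith
  · have h3 : x ^ 3 < 0 := Odd.pow_neg odd3 hx
    linarith
  · have h3 : y ^ 3 < 0 := Odd.pow_neg odd3 hy
    linarith

theorem hesse_map_avoids_first_quadrant :
    ¬ ∃ x y : ℝ, x ^ 3 ≠ y ^ 3 ∧
      0 < (1 - x ^ 3) * y / (x ^ 3 - y ^ 3) ∧
      0 < (1 - y ^ 3) * x / (y ^ 3 - x ^ 3) := by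
  rintro ⟨x, y, hne, h1, h2⟩
  rcases lt_or_gt_of_ne hne with h | h
  · exact hesse_aux y x h h2 h1
  · exact hesse_aux x y h h1 h2
end
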